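/- Let k be a field, n a natural number, and W a Lagrangian subspace of k^n ⊕ k^n with respect to the standard symplectic form. Then there exists a linear map g belonging to the submonoid (under composition) of linear endomorphisms of k^n ⊕ k^n generated by the set of gates {F_i : i ∈ Fin n} ∪ {S_{a,i} : a ∈ k, i ∈ Fin n} ∪ {C_{a,i,j} : a ∈ k, i,j ∈ Fin n, i ≠ j} such that W is the image under g of the standard Lagrangian subspace {(x, 0) : x ∈ k^n}. -/

import Mathlib

namespace Statement15

variable {k : Type*} [Field k]

/-- Dot product on `k^n`. -/
def dot {n : ℕ} (x y : Fin n → k) : k := ∑ i, x i * y i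

/-- The standard symplectic form on `k^n ⊕ k^n`:
`ω((x,z),(x',z')) = ⟨x,z'⟩ − ⟨z,x'⟩`. -/
def sf {n : ℕ} (v w : (Fin n → k) × (Fin n → k)) : k :=
  dot v.1 w.2 - dot v.2 w.1

/-- The Fourier gate `F_i`, as a linear endomorphism of `k^n ⊕ k^n`:
it replaces the coordinates `(xᵢ, zᵢ)` by `(zᵢ, −xᵢ)`. -/
def Fgate {n : ℕ} (i : Fin n) : Module.End k ((Fin n → k) × (Fin n → k)) :=
  (LinearMap.pi fun j => if j = i
      then (LinearMap.proj i).comp (LinearMap.snd k (Fin n → k) (Fin n → k))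
      else (LinearMap.proj j).comp (LinearMap.fst k (Fin n → k) (Fin n → k))).prod
  (LinearMap.pi fun j => if j = i
      then -((LinearMap.proj i).comp (LinearMap.fst k (Fin n → k) (Fin n → k)))
      else (LinearMap.proj j).comp (LinearMap.snd k (Fin n → k) (Fin n → k)))

/-- The phase gate `S_{a,i}`, as a linear endomorphism of `k^n ⊕ k^n`:
it replaces `zᵢ` by `zᵢ + a·xᵢ`. -/
def Sgate {n : ℕ} (a : k) (i : Fin n) :
    Module.End k ((Fin n → k) × (Fin n → k)) :=
  (LinearMap.fst k (Fin n → k) (Fin n → k)).prod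
  (LinearMap.pi fun j => if j = i
      then (LinearMap.proj i).comp (LinearMap.snd k (Fin n → k) (Fin n → k)) +
        a • (LinearMap.proj i).comp (LinearMap.fst k (Fin n → k) (Fin n → k))
      else (LinearMap.proj j).comp (LinearMap.snd k (Fin n → k) (Fin n → k)))

/-- The controlled gate `C_{a,i,j}`, as a linear endomorphism of `k^n ⊕ k^n`:
it replaces `xⱼ` by `xⱼ + a·xᵢ` and `zᵢ` by `zᵢ − a·zⱼ`. -/
def Cgate {n : ℕ} (a : k) (i j : Fin n) :
    Module.End k ((Fin n → k) × (Fin n → k)) :=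
  (LinearMap.pi fun l => if l = j
      then (LinearMap.proj j).comp (LinearMap.fst k (Fin n → k) (Fin n → k)) +
        a • (LinearMap.proj i).comp (LinearMap.fst k (Fin n → k) (Fin n → k))
      else (LinearMap.proj l).comp (LinearMap.fst k (Fin n → k) (Fin n → k))).prod
  (LinearMap.pi fun l => if l = i
      then (LinearMap.proj i).comp (LinearMap.snd k (Fin n → k) (Fin n → k)) -
        a • (LinearMap.proj j).comp (LinearMap.snd k (Fin n → k) (Fin n → k))
      else (LinearMap.proj l).comp (LinearMap.snd k (Fin n → k) (Fin n → k)))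

variable {n : ℕ}


lemma Fgate_fst (i l : Fin n) (v : (Fin n → k) × (Fin n → k)) :
    (Fgate i v).1 l = if l = i then v.2 i else v.1 l := by
  by_cases h : l = i <;> simp [Fgate, h]
lemma Fgate_snd (i l : Fin n) (v : (Fin n → k) × (Fin n → k)) :
    (Fgate i v).2 l = if l = i then -v.1 i else v.2 l := by
  by_cases h : l = i <;> simp [Fgate, h]
lemma Sgate_fst (a : k) (i : Fin n) (v : (Fin n → k) × (Fin n → k)) :
    (Sgate a i v).1 = v.1 := rfl
lemma Sgate_snd (a : k) (i l : Fin n) (v : (Fin n → k) × (Fin n → k)) :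
    (Sgate a i v).2 l = if l = i then v.2 i + a * v.1 i else v.2 l := by
  by_cases h : l = i <;> simp [Sgate, h]
lemma Cgate_fst (a : k) (i j l : Fin n) (v : (Fin n → k) × (Fin n → k)) :
    (Cgate a i j v).1 l = if l = j then v.1 j + a * v.1 i else v.1 l := by
  by_cases h : l = j <;> simp [Cgate, h]
lemma Cgate_snd (a : k) (i j l : Fin n) (v : (Fin n → k) × (Fin n → k)) :
    (Cgate a i j v).2 l = if l = i then v.2 i - a * v.2 j else v.2 l := by
  by_cases h : l = i <;> simp [Cgate, h]

lemma sf_eq (v w : (Fin n → k) × (Fin n → k)) :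
    sf v w = ∑ l, (v.1 l * w.2 l - v.2 l * w.1 l) := by
  simp [sf, dot, Finset.sum_sub_distrib]

lemma sf_Fgate (i : Fin n) (v w : (Fin n → k) × (Fin n → k)) :
    sf (Fgate i v) (Fgate i w) = sf v w := by
  rw [sf_eq, sf_eq]
  refine Finset.sum_congr rfl fun l _ => ?_
  by_cases h : l = i <;> simp [Fgate_fst, Fgate_snd, h] <;> ring

lemma sf_Sgate (a : k) (i : Fin n) (v w : (Fin n → k) × (Fin n → k)) :
    sf (Sgate a i v) (Sgate a i w) = sf v w := by
  rw [sf_eq, sf_eq]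
  refine Finset.sum_congr rfl fun l _ => ?_
  by_cases h : l = i <;> simp [Sgate_fst, Sgate_snd, h] <;> ring

lemma sf_Cgate (a : k) (i j : Fin n) (hij : i ≠ j) (v w : (Fin n → k) × (Fin n → k)) :
    sf (Cgate a i j v) (Cgate a i j w) = sf v w := by
  rw [sf_eq, sf_eq]
  have hji : j ≠ i := hij.symm
  have hjmem : j ∈ Finset.univ.erase i := Finset.mem_erase.2 ⟨hji, Finset.mem_univ j⟩
  rw [← Finset.add_sum_erase _ _ (Finset.mem_univ i),
      ← Finset.add_sum_erase _ _ hjmem,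
      ← Finset.add_sum_erase (f := fun l => (v.1 l * w.2 l - v.2 l * w.1 l)) Finset.univ (Finset.mem_univ i),
      ← Finset.add_sum_erase (f := fun l => (v.1 l * w.2 l - v.2 l * w.1 l)) _ hjmem]
  have hsum : ∑ l ∈ (Finset.univ.erase i).erase j,
      ((Cgate a i j v).1 l * (Cgate a i j w).2 l - (Cgate a i j v).2 l * (Cgate a i j w).1 l)
      = ∑ l ∈ (Finset.univ.erase i).erase j, (v.1 l * w.2 l - v.2 l * w.1 l) := by
    refine Finset.sum_congr rfl fun l hl => ?_
    have hlj : l ≠ j := (Finset.mem_erase.1 hl).1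
    have hli : l ≠ i := (Finset.mem_erase.1 (Finset.mem_erase.1 hl).2).1
    simp [Cgate_fst, Cgate_snd, hli, hlj]
  rw [hsum]
  simp [Cgate_fst, Cgate_snd, hij, hji]
  ring


/-- The gate set. -/
def G (k : Type*) [Field k] (n : ℕ) : Set (Module.End k ((Fin n → k) × (Fin n → k))) :=
  ({h | ∃ i : Fin n, h = Fgate i} ∪
   {h | ∃ (a : k) (i : Fin n), h = Sgate a i} ∪
   {h | ∃ (a : k) (i j : Fin n), i ≠ j ∧ h = Cgate a i j})

lemma Fgate_mem (i : Fin n) : (Fgate i : Module.End k _) ∈ G k n :=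
  Or.inl (Or.inl ⟨i, rfl⟩)
lemma Sgate_mem (a : k) (i : Fin n) : Sgate a i ∈ G k n :=
  Or.inl (Or.inr ⟨a, i, rfl⟩)
lemma Cgate_mem (a : k) {i j : Fin n} (hij : i ≠ j) : Cgate a i j ∈ G k n :=
  Or.inr ⟨a, i, j, hij, rfl⟩

lemma Fgate_pow (i : Fin n) :
    (Fgate i * Fgate i * Fgate i : Module.End k _) * Fgate i = 1 := by
  refine LinearMap.ext fun v => ?_
  refine Prod.ext (funext fun l => ?_) (funext fun l => ?_) <;>
    · simp only [Module.End.mul_apply, Fgate_fst, Fgate_snd, Module.End.one_apply]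
      by_cases h : l = i <;> simp [h]

lemma Sgate_inv (a : k) (i : Fin n) : Sgate (-a) i * Sgate a i = 1 := by
  refine LinearMap.ext fun v => ?_
  refine Prod.ext (funext fun l => ?_) (funext fun l => ?_)
  · simp only [Module.End.mul_apply, Sgate_fst, Module.End.one_apply]
  · simp only [Module.End.mul_apply, Sgate_fst, Sgate_snd, Module.End.one_apply]
    by_cases h : l = i <;> simp [h] <;> try ring

lemma Cgate_inv (a : k) {i j : Fin n} (hij : i ≠ j) :
    Cgate (-a) i j * Cgate a i j = 1 := by
  refine LinearMap.ext fun v => ?_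
  refine Prod.ext (funext fun l => ?_) (funext fun l => ?_) <;>
    · simp only [Module.End.mul_apply, Cgate_fst, Cgate_snd, Module.End.one_apply]
      by_cases h1 : l = j <;> by_cases h2 : l = i <;>
        simp [h1, h2, hij, hij.symm] <;> try ring

lemma exists_inv {g : Module.End k ((Fin n → k) × (Fin n → k))}
    (hg : g ∈ Submonoid.closure (G k n)) :
    ∃ g' ∈ Submonoid.closure (G k n), g' * g = 1 ∧ g * g' = 1 := by
  induction hg using Submonoid.closure_induction with
  | one => exact ⟨1, Submonoid.one_mem _, by simp, by simp⟩
  | mul g₁ g₂ h₁ h₂ ih₁ ih₂ =>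
    obtain ⟨g₁', hm₁, hl₁, hr₁⟩ := ih₁
    obtain ⟨g₂', hm₂, hl₂, hr₂⟩ := ih₂
    refine ⟨g₂' * g₁', Submonoid.mul_mem _ hm₂ hm₁, ?_, ?_⟩
    · rw [mul_assoc, ← mul_assoc g₁', hl₁, one_mul, hl₂]
    · rw [mul_assoc, ← mul_assoc g₂, hr₂, one_mul, hr₁]
  | mem g hg =>
    rcases hg with (⟨i, rfl⟩ | ⟨a, i, rfl⟩) | ⟨a, i, j, hij, rfl⟩
    · refine ⟨Fgate i * Fgate i * Fgate i, ?_, Fgate_pow i, ?_⟩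
      · exact Submonoid.mul_mem _ (Submonoid.mul_mem _
          (Submonoid.subset_closure (Fgate_mem i)) (Submonoid.subset_closure (Fgate_mem i)))
          (Submonoid.subset_closure (Fgate_mem i))
      · simp only [← mul_assoc]
        exact Fgate_pow i
    · exact ⟨Sgate (-a) i, Submonoid.subset_closure (Sgate_mem _ _), Sgate_inv a i,
        by have := Sgate_inv (-a) i; rwa [neg_neg] at this⟩
    · exact ⟨Cgate (-a) i j, Submonoid.subset_closure (Cgate_mem _ hij), Cgate_inv a hij,
        by have := Cgate_inv (-a) hij; rwa [neg_neg] at this⟩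

lemma sf_of_mem {g : Module.End k ((Fin n → k) × (Fin n → k))}
    (hg : g ∈ Submonoid.closure (G k n)) (v w : (Fin n → k) × (Fin n → k)) :
    sf (g v) (g w) = sf v w := by
  induction hg using Submonoid.closure_induction generalizing v w with
  | one => simp
  | mul g₁ g₂ h₁ h₂ ih₁ ih₂ => simp only [Module.End.mul_apply]; rw [ih₁, ih₂]
  | mem g hg =>
    rcases hg with (⟨i, rfl⟩ | ⟨a, i, rfl⟩) | ⟨a, i, j, hij, rfl⟩
    · exact sf_Fgate i v w
    · exact sf_Sgate a i v w
    · exact sf_Cgate a i j hij v w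


/-- A product of controlled gates realizing `z_i ↦ z_i - ∑ a_j z_j`. -/
lemma Cprod (i : Fin n) (t : Finset (Fin n)) (hit : i ∉ t) (a : Fin n → k)
    (ha : ∀ j ∉ t, a j = 0) :
    ∃ g ∈ Submonoid.closure (G k n),
      (∀ v : (Fin n → k) × (Fin n → k),
        (g v).2 i = v.2 i - ∑ j, a j * v.2 j) ∧
      (∀ v : (Fin n → k) × (Fin n → k), ∀ l, l ≠ i → (g v).2 l = v.2 l) ∧
      (∀ v : (Fin n → k) × (Fin n → k), (g v).1 i = v.1 i) := by
  induction t using Finset.induction_on generalizing a with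
  | empty =>
    refine ⟨1, Submonoid.one_mem _, fun v => ?_, fun v l _ => rfl, fun v => rfl⟩
    have : ∀ j, a j * v.2 j = 0 := fun j => by rw [ha j (Finset.notMem_empty j), zero_mul]
    simp [this]
  | insert j t hjs ih =>
    have hij : i ≠ j := fun h => hit (h ▸ Finset.mem_insert_self j t)
    have hit' : i ∉ t := fun h => hit (Finset.mem_insert_of_mem h)
    set a' := Function.update a j 0 with ha'
    have ha'0 : ∀ l ∉ t, a' l = 0 := by
      intro l hl
      by_cases hlj : l = j
      · subst hlj; simp [ha']
      · rw [ha', Function.update_of_ne hlj]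
        exact ha l (by simp [hlj, hl])
    obtain ⟨g', hg'mem, hg'i, hg'l, hg'x⟩ := ih hit' a' ha'0
    refine ⟨g' * Cgate (a j) i j, Submonoid.mul_mem _ hg'mem
      (Submonoid.subset_closure (Cgate_mem _ hij)), fun v => ?_, fun v l hl => ?_, fun v => ?_⟩
    · rw [Module.End.mul_apply, hg'i]
      have h1 : (Cgate (a j) i j v).2 i = v.2 i - a j * v.2 j := by
        rw [Cgate_snd, if_pos rfl]
      have h2 : ∑ l, a' l * (Cgate (a j) i j v).2 l = ∑ l, a' l * v.2 l := by
        refine Finset.sum_congr rfl fun l _ => ?_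
        by_cases hli : l = i
        · subst hli
          have h0 : a' l = 0 := by rw [ha', Function.update_of_ne hij, ha l hit]
          rw [h0, zero_mul, zero_mul]
        · rw [Cgate_snd, if_neg hli]
      rw [h1, h2]
      have h3 : ∑ l, a l * v.2 l = a j * v.2 j + ∑ l, a' l * v.2 l := by
        rw [← Finset.add_sum_erase _ (fun l => a l * v.2 l) (Finset.mem_univ j),
            ← Finset.add_sum_erase _ (fun l => a' l * v.2 l) (Finset.mem_univ j)]
        have h0 : a' j * v.2 j = 0 := by simp [ha']
        rw [h0, zero_add]
        congr 1
        refine Finset.sum_congr rfl fun l hl => ?_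
        rw [ha', Function.update_of_ne (Finset.mem_erase.1 hl).1]
      rw [h3]; ring
    · rw [Module.End.mul_apply, hg'l _ _ hl, Cgate_snd, if_neg hl]
    · rw [Module.End.mul_apply, hg'x, Cgate_fst, if_neg hij]


/-- x-coordinate functional. -/
def xfun (i : Fin n) : ((Fin n → k) × (Fin n → k)) →ₗ[k] k :=
  (LinearMap.proj i).comp (LinearMap.fst k (Fin n → k) (Fin n → k))
/-- z-coordinate functional. -/
def zfun (i : Fin n) : ((Fin n → k) × (Fin n → k)) →ₗ[k] k :=
  (LinearMap.proj i).comp (LinearMap.snd k (Fin n → k) (Fin n → k))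

lemma span_step {W : Submodule k ((Fin n → k) × (Fin n → k))} (i : Fin n)
    (hno : ∀ w ∈ W, w.1 i = 0 → (∀ j, j ≠ i → w.2 j = 0) → w.2 i = 0) :
    ∃ (c : k) (a : Fin n → k), a i = 0 ∧
      ∀ v ∈ W, v.2 i = c * v.1 i + ∑ j, a j * v.2 j := by
  set L : Fin n → (W →ₗ[k] k) :=
    fun j => (if j = i then xfun i else zfun j).comp W.subtype with hL
  set K : W →ₗ[k] k := (zfun i).comp W.subtype with hK
  have hker : ⨅ j, LinearMap.ker (L j) ≤ LinearMap.ker K := by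
    intro w hw
    simp only [Submodule.mem_iInf, LinearMap.mem_ker] at hw ⊢
    have hx : (w : (Fin n → k) × (Fin n → k)).1 i = 0 := by
      have := hw i
      simpa [hL, xfun] using this
    have hz : ∀ j, j ≠ i → (w : (Fin n → k) × (Fin n → k)).2 j = 0 := by
      intro j hj
      have := hw j
      simpa [hL, hj, zfun] using this
    have := hno w w.2 hx hz
    simpa [hK, zfun] using this
  have hspan := mem_span_of_iInf_ker_le_ker hker
  obtain ⟨c, hc⟩ := (Submodule.mem_span_range_iff_exists_fun k).1 hspan
  refine ⟨c i, Function.update c i 0, by simp, fun v hv => ?_⟩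
  have := LinearMap.congr_fun hc ⟨v, hv⟩
  simp only [LinearMap.coe_sum, Finset.sum_apply, LinearMap.smul_apply, smul_eq_mul] at this
  have hKv : K ⟨v, hv⟩ = v.2 i := rfl
  rw [hKv] at this
  rw [← this]
  have hterm : ∀ j, c j * L j ⟨v, hv⟩ =
      (if j = i then c i * v.1 i else Function.update c i 0 j * v.2 j) := by
    intro j
    by_cases hj : j = i
    · subst hj; simp [hL, xfun]
    · simp [hL, hj, zfun, Function.update_of_ne hj]
  rw [Finset.sum_congr rfl fun j _ => hterm j]
  rw [← Finset.add_sum_erase _ _ (Finset.mem_univ i),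
      ← Finset.add_sum_erase _
        (fun j => Function.update c i 0 j * v.2 j) (Finset.mem_univ i)]
  simp only [if_pos rfl, Function.update_self, zero_mul, zero_add]
  congr 1
  refine Finset.sum_congr rfl fun j hj => ?_
  rw [if_neg (Finset.mem_erase.1 hj).1]

/-- Clearing the `z_i` coordinate on `W`, given the span condition. -/
lemma clearA {W : Submodule k ((Fin n → k) × (Fin n → k))} (i : Fin n)
    (c : k) (a : Fin n → k) (hai : a i = 0)
    (h : ∀ v ∈ W, v.2 i = c * v.1 i + ∑ j, a j * v.2 j) :
    ∃ g ∈ Submonoid.closure (G k n),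
      (∀ v : (Fin n → k) × (Fin n → k), ∀ l, l ≠ i → (g v).2 l = v.2 l) ∧
      (∀ v ∈ W, (g v).2 i = 0) := by
  obtain ⟨g₀, hg₀mem, hg₀i, hg₀l, hg₀x⟩ :=
    Cprod i (Finset.univ.erase i) (by simp) a (by
      intro j hj
      have : j = i := by
        by_contra hji
        exact hj (Finset.mem_erase.2 ⟨hji, Finset.mem_univ j⟩)
      rw [this, hai])
  refine ⟨Sgate (-c) i * g₀, Submonoid.mul_mem _
    (Submonoid.subset_closure (Sgate_mem _ _)) hg₀mem, fun v l hl => ?_, fun v hv => ?_⟩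
  · rw [Module.End.mul_apply, Sgate_snd, if_neg hl, hg₀l v l hl]
  · rw [Module.End.mul_apply, Sgate_snd, if_pos rfl, hg₀i, hg₀x, h v hv]
    ring


lemma lagrangian_map {W : Submodule k ((Fin n → k) × (Fin n → k))}
    (hW : ∀ v, v ∈ W ↔ ∀ w ∈ W, sf v w = 0)
    {g : Module.End k ((Fin n → k) × (Fin n → k))}
    (hg : g ∈ Submonoid.closure (G k n)) :
    ∀ v, v ∈ W.map g ↔ ∀ w ∈ W.map g, sf v w = 0 := by
  obtain ⟨g', hg'mem, hinv1, hinv2⟩ := exists_inv hg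
  have hgg' : ∀ v, g (g' v) = v := fun v => by
    rw [← Module.End.mul_apply, hinv2, Module.End.one_apply]
  have hg'g : ∀ v, g' (g v) = v := fun v => by
    rw [← Module.End.mul_apply, hinv1, Module.End.one_apply]
  have hmem : ∀ v, v ∈ W.map g ↔ g' v ∈ W := by
    intro v
    constructor
    · rintro ⟨u, hu, rfl⟩; rw [hg'g]; exact hu
    · intro h; exact ⟨g' v, h, hgg' v⟩
  intro v
  rw [hmem v, hW (g' v)]
  constructor
  · rintro h w ⟨u, hu, rfl⟩
    have : sf v (g u) = sf (g (g' v)) (g u) := by rw [hgg']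
    rw [this, sf_of_mem hg]
    exact h u hu
  · intro h w hw
    have : sf (g' v) w = sf v (g w) := by
      rw [← sf_of_mem hg (g' v) w, hgg']
    rw [this]
    exact h (g w) ⟨w, hw, rfl⟩

lemma clear_i {W : Submodule k ((Fin n → k) × (Fin n → k))}
    (hW : ∀ v, v ∈ W ↔ ∀ w ∈ W, sf v w = 0) (i : Fin n) :
    ∃ g ∈ Submonoid.closure (G k n),
      (∀ v : (Fin n → k) × (Fin n → k), ∀ l, l ≠ i → (g v).2 l = v.2 l) ∧
      (∀ v ∈ W, (g v).2 i = 0) := by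
  by_cases hcase : ∀ w ∈ W, w.1 i = 0 → (∀ j, j ≠ i → w.2 j = 0) → w.2 i = 0
  · obtain ⟨c, a, hai, hspan⟩ := span_step i hcase
    exact clearA i c a hai hspan
  · push_neg at hcase
    obtain ⟨w, hw, hw1, hw2, hwi⟩ := hcase
    have hFmem : (Fgate i : Module.End k _) ∈ Submonoid.closure (G k n) :=
      Submonoid.subset_closure (Fgate_mem i)
    have hW' := lagrangian_map hW hFmem
    have hno' : ∀ u' ∈ W.map (Fgate i), u'.1 i = 0 →
        (∀ j, j ≠ i → u'.2 j = 0) → u'.2 i = 0 := by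
      rintro u' ⟨u, hu, rfl⟩ h1 h2
      rw [Fgate_snd, if_pos rfl]
      have hu2i : u.2 i = 0 := by
        have := h1; rwa [Fgate_fst, if_pos rfl] at this
      have hu2 : u.2 = 0 := by
        funext j
        by_cases hj : j = i
        · rw [hj, hu2i]; rfl
        · have := h2 j hj; rwa [Fgate_snd, if_neg hj] at this
      by_contra hne
      have hu1i : u.1 i ≠ 0 := fun h => hne (by rw [h, neg_zero])
      have hsf : sf w u = 0 := (hW w).1 hw u hu
      have hd1 : dot w.1 u.2 = 0 := by simp [dot, hu2]
      have hd2 : dot w.2 u.1 = w.2 i * u.1 i := by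
        refine Finset.sum_eq_single i (fun b _ hb => by rw [hw2 b hb, zero_mul])
          (fun h => absurd (Finset.mem_univ i) h)
      rw [sf, hd1, hd2, zero_sub, neg_eq_zero] at hsf
      exact hwi ((mul_eq_zero.1 hsf).resolve_right hu1i)
    obtain ⟨c, a, hai, hspan⟩ := span_step i hno'
    obtain ⟨g₀, hg₀mem, hg₀l, hg₀i⟩ := clearA i c a hai hspan
    refine ⟨g₀ * Fgate i, Submonoid.mul_mem _ hg₀mem hFmem, fun v l hl => ?_, fun v hv => ?_⟩
    · rw [Module.End.mul_apply, hg₀l _ _ hl, Fgate_snd, if_neg hl]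
    · rw [Module.End.mul_apply]
      exact hg₀i (Fgate i v) (Submodule.mem_map_of_mem hv)

lemma reduce (s : Finset (Fin n)) :
    ∀ W : Submodule k ((Fin n → k) × (Fin n → k)),
      (∀ v, v ∈ W ↔ ∀ w ∈ W, sf v w = 0) →
      (∀ v ∈ W, ∀ j, j ∉ s → v.2 j = 0) →
      ∃ g ∈ Submonoid.closure (G k n), ∀ v ∈ W.map g, v.2 = 0 := by
  induction s using Finset.induction_on with
  | empty =>
    intro W hW hs
    refine ⟨1, Submonoid.one_mem _, ?_⟩
    rintro v ⟨u, hu, rfl⟩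
    funext j
    rw [Module.End.one_apply]
    exact hs u hu j (Finset.notMem_empty j)
  | insert i t hjs ih =>
    intro W hW hs
    obtain ⟨g₀, hg₀mem, hg₀l, hg₀i⟩ := clear_i hW i
    have hW₁ := lagrangian_map hW hg₀mem
    have hs₁ : ∀ v ∈ W.map g₀, ∀ j, j ∉ t → v.2 j = 0 := by
      rintro v ⟨u, hu, rfl⟩ j hj
      by_cases hji : j = i
      · rw [hji]; exact hg₀i u hu
      · rw [hg₀l u j hji]
        refine hs u hu j (fun h => ?_)
        rcases Finset.mem_insert.1 h with h | h
        · exact hji h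
        · exact hj h
    obtain ⟨g₁, hg₁mem, hfin⟩ := ih (W.map g₀) hW₁ hs₁
    refine ⟨g₁ * g₀, Submonoid.mul_mem _ hg₁mem hg₀mem, fun v hv => ?_⟩
    have hmap : W.map (g₁ * g₀) = (W.map g₀).map g₁ := Submodule.map_comp g₀ g₁ W
    exact hfin v (hmap ▸ hv)


/-- Every Lagrangian subspace `W` of `k^n ⊕ k^n` is the image of the standard
Lagrangian subspace `{(x,0)}` under a linear map `g` in the submonoid (under
composition) of linear endomorphisms generated by the gates `F_i`, `S_{a,i}`
and `C_{a,i,j}` (`i ≠ j`). -/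
theorem statement15 (n : ℕ) (W : Submodule k ((Fin n → k) × (Fin n → k)))
    (hW : ∀ v : (Fin n → k) × (Fin n → k), v ∈ W ↔ ∀ w ∈ W, sf v w = 0) :
    ∃ g : Module.End k ((Fin n → k) × (Fin n → k)),
      g ∈ Submonoid.closure
          ({h | ∃ i : Fin n, h = Fgate i} ∪
           {h | ∃ (a : k) (i : Fin n), h = Sgate a i} ∪
           {h | ∃ (a : k) (i j : Fin n), i ≠ j ∧ h = Cgate a i j}) ∧
        (W : Set ((Fin n → k) × (Fin n → k))) =
          ⇑g '' {p : (Fin n → k) × (Fin n → k) | p.2 = 0} := by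

  obtain ⟨g, hgmem, hfin⟩ :=
    reduce Finset.univ W hW (fun v _ j hj => absurd (Finset.mem_univ j) hj)
  obtain ⟨g', hg'mem, hinv1, hinv2⟩ := exists_inv hgmem
  have hWg := lagrangian_map hW hgmem
  have hset : ((W.map g : Submodule k _) : Set ((Fin n → k) × (Fin n → k)))
      = {p | p.2 = 0} := by
    apply Set.Subset.antisymm
    · intro v hv; exact hfin v hv
    · intro p hp
      have hp2 : p.2 = 0 := hp
      refine (hWg p).2 (fun w hw => ?_)
      have hw2 : w.2 = 0 := hfin w hw
      simp [sf, dot, hp2, hw2]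
  refine ⟨g', hg'mem, ?_⟩
  have h1 : ⇑g' '' {p : (Fin n → k) × (Fin n → k) | p.2 = 0}
      = ((W.map g).map g' : Set ((Fin n → k) × (Fin n → k))) := by
    rw [Submodule.map_coe, hset]
  rw [h1]
  have h2 : (W.map g).map g' = W := by
    rw [← Submodule.map_comp]
    have : g'.comp g = (1 : Module.End k _) := hinv1
    rw [this]
    exact Submodule.map_id W
  rw [h2]


end Statement15
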